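/- Let l > 0 and let z₂ = (l/√3)·e^{−iπ/3} be a vertex of the equilateral triangle D with vertices z₁ = (l/√3)e^{iπ/3}, z₂ = z̄₁, z₃ = −l/√3. If z ∈ D (the closed triangle) then π/2 ≤ arg(z − z₂) ≤ 5π/6 (for z ≠ z₂). Consequently, if −π/2 ≤ arg k ≤ π/6, then 0 ≤ arg(k(z − z₂)) ≤ π, so Im(k(z−z₂)) ≥ 0 and |exp(ik(z − z₂))| ≤ 1. -/

import Mathlib

open Complex

lemma aux_arg_bounds {w : ℂ} (hw : w ≠ 0) (h1 : w.re ≤ 0)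
    (h2 : 0 ≤ w.re + Real.sqrt 3 * w.im) :
    Real.pi / 2 ≤ arg w ∧ arg w ≤ 5 * Real.pi / 6 := by
  have h3 : (0:ℝ) < Real.sqrt 3 := by positivity
  have him : 0 < w.im := by
    rcases lt_trichotomy w.im 0 with h | h | h
    · nlinarith
    · exfalso
      apply hw
      have hre : w.re = 0 := by nlinarith
      exact Complex.ext hre h
    · exact h
  have habs : 0 < ‖w‖ := by simpa using hw
  have hargIcc : arg w ∈ Set.Icc 0 Real.pi :=
    ⟨Complex.arg_nonneg_iff.2 him.le, Complex.arg_le_pi w⟩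
  have hpi : (0:ℝ) < Real.pi := Real.pi_pos
  have hcos : Real.cos (arg w) = w.re / ‖w‖ := Complex.cos_arg hw
  constructor
  · have : Real.cos (arg w) ≤ Real.cos (Real.pi / 2) := by
      rw [hcos, Real.cos_pi_div_two]
      exact div_nonpos_of_nonpos_of_nonneg h1 habs.le
    exact (Real.strictAntiOn_cos.le_iff_ge hargIcc
      ⟨by linarith, by linarith⟩).1 this
  · have hsq : (‖w‖) ^ 2 = w.re ^ 2 + w.im ^ 2 := by
      rw [Complex.sq_norm, Complex.normSq_apply]; ring
    have h3s : Real.sqrt 3 ^ 2 = 3 := Real.sq_sqrt (by norm_num)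
    have hkey : -(2 * w.re) ≤ Real.sqrt 3 * ‖w‖ := by
      nlinarith [sq_nonneg (Real.sqrt 3 * ‖w‖ + 2 * w.re),
        sq_nonneg (Real.sqrt 3 * w.im + w.re), mul_pos h3 habs]
    have hc56 : Real.cos (5 * Real.pi / 6) = -(Real.sqrt 3 / 2) := by
      rw [show (5 * Real.pi / 6 : ℝ) = Real.pi - Real.pi / 6 by ring,
        Real.cos_pi_sub, Real.cos_pi_div_six]
    have : Real.cos (5 * Real.pi / 6) ≤ Real.cos (arg w) := by
      rw [hcos, hc56, neg_le, ← neg_div, div_le_iff₀ habs]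
      nlinarith [hkey]
    exact (Real.strictAntiOn_cos.le_iff_ge
      ⟨by linarith, by linarith⟩ hargIcc).1 this

theorem stmt_16 (l : ℝ) (hl : 0 < l)
    (z₁ z₂ z₃ : ℂ)
    (hz₁ : z₁ = (l / Real.sqrt 3 : ℝ) * Complex.exp (Real.pi * Complex.I / 3))
    (hz₂ : z₂ = (l / Real.sqrt 3 : ℝ) * Complex.exp (-(Real.pi * Complex.I / 3)))
    (hz₃ : z₃ = -(l / Real.sqrt 3 : ℝ))
    (D : Set ℂ) (hD : D = convexHull ℝ {z₁, z₂, z₃}) :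
    ∀ z ∈ D, z ≠ z₂ →
      (Real.pi / 2 ≤ Complex.arg (z - z₂) ∧ Complex.arg (z - z₂) ≤ 5 * Real.pi / 6) ∧
      ∀ k : ℂ, k ≠ 0 → -(Real.pi / 2) ≤ Complex.arg k → Complex.arg k ≤ Real.pi / 6 →
        (0 ≤ Complex.arg (k * (z - z₂)) ∧ Complex.arg (k * (z - z₂)) ≤ Real.pi) ∧
        0 ≤ (k * (z - z₂)).im ∧
        ‖Complex.exp (Complex.I * k * (z - z₂))‖ ≤ 1 := by
  have h3 : (0:ℝ) < Real.sqrt 3 := by positivity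
  have h3s : Real.sqrt 3 ^ 2 = 3 := Real.sq_sqrt (by norm_num)
  -- real/imag parts of vertices
  have he1re : (Complex.exp (Real.pi * Complex.I / 3)).re = 1 / 2 := by
    rw [Complex.exp_re]
    simp [Real.cos_pi_div_three]
  have he1im : (Complex.exp (Real.pi * Complex.I / 3)).im = Real.sqrt 3 / 2 := by
    rw [Complex.exp_im]
    simp [Real.sin_pi_div_three]
  have he2re : (Complex.exp (-(Real.pi * Complex.I / 3))).re = 1 / 2 := by
    rw [Complex.exp_re]
    simp [Real.cos_pi_div_three]
  have he2im : (Complex.exp (-(Real.pi * Complex.I / 3))).im = -(Real.sqrt 3 / 2) := by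
    rw [Complex.exp_im]
    simp [Real.sin_pi_div_three]
  have hz1re : z₁.re = l / Real.sqrt 3 * (1 / 2) := by
    rw [hz₁]; simp [Complex.mul_re, he1re, he1im]
  have hz1im : z₁.im = l / Real.sqrt 3 * (Real.sqrt 3 / 2) := by
    rw [hz₁]; simp [Complex.mul_im, he1re, he1im]
  have hz2re : z₂.re = l / Real.sqrt 3 * (1 / 2) := by
    rw [hz₂]; simp [Complex.mul_re, he2re, he2im]
  have hz2im : z₂.im = l / Real.sqrt 3 * (-(Real.sqrt 3 / 2)) := by
    rw [hz₂]; simp [Complex.mul_im, he2re, he2im]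
  have hz3re : z₃.re = -(l / Real.sqrt 3) := by rw [hz₃]; simp
  have hz3im : z₃.im = 0 := by rw [hz₃]; simp
  -- the convex region
  set S : Set ℂ := {w : ℂ | w.re ≤ z₂.re ∧
      z₂.re + Real.sqrt 3 * z₂.im ≤ w.re + Real.sqrt 3 * w.im} with hS
  have hconv : Convex ℝ S := by
    have hlin1 : IsLinearMap ℝ (fun w : ℂ => w.re) :=
      ⟨fun a b => Complex.add_re a b, fun c a => Complex.smul_re c a⟩
    have hlin2 : IsLinearMap ℝ (fun w : ℂ => w.re + Real.sqrt 3 * w.im) :=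
      ⟨fun a b => by
        simp only [Complex.add_re, Complex.add_im]; ring, fun c a => by
        simp only [Complex.smul_re, Complex.smul_im, smul_eq_mul]; ring⟩
    have c1 : Convex ℝ {w : ℂ | w.re ≤ z₂.re} := convex_halfSpace_le hlin1 _
    have c2 : Convex ℝ {w : ℂ | z₂.re + Real.sqrt 3 * z₂.im ≤ w.re + Real.sqrt 3 * w.im} :=
      convex_halfSpace_ge hlin2 _
    exact c1.inter c2
  have hsub : D ⊆ S := by
    rw [hD]
    apply convexHull_min _ hconv
    intro w hw
    rcases hw with h | h | h <;> subst h
    · constructor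
      · rw [hz1re, hz2re]
      · rw [hz1im, hz2im]
        have : 0 ≤ l / Real.sqrt 3 := by positivity
        nlinarith
    · exact ⟨le_refl _, le_refl _⟩
    · constructor
      · rw [hz3re, hz2re]
        have hl3 : 0 < l / Real.sqrt 3 := by positivity
        nlinarith
      · rw [hz3re, hz3im, hz2re, hz2im]
        have hl3 : 0 < l / Real.sqrt 3 := by positivity
        nlinarith
  intro z hz hne
  have hzS := hsub hz
  have hwne : z - z₂ ≠ 0 := sub_ne_zero.2 hne
  have hre : (z - z₂).re ≤ 0 := by
    simp only [Complex.sub_re]; linarith [hzS.1]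
  have him : 0 ≤ (z - z₂).re + Real.sqrt 3 * (z - z₂).im := by
    simp only [Complex.sub_re, Complex.sub_im]; linarith [hzS.2]
  obtain ⟨harg1, harg2⟩ := aux_arg_bounds hwne hre him
  refine ⟨⟨harg1, harg2⟩, ?_⟩
  intro k hk hk1 hk2
  have hpi : (0:ℝ) < Real.pi := Real.pi_pos
  have hargmul : (k * (z - z₂)).arg = k.arg + (z - z₂).arg :=
    Complex.arg_mul hk hwne ⟨by linarith, by linarith⟩
  have h0 : 0 ≤ Complex.arg (k * (z - z₂)) := by rw [hargmul]; linarith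
  have hπ : Complex.arg (k * (z - z₂)) ≤ Real.pi := by rw [hargmul]; linarith
  have himge : 0 ≤ (k * (z - z₂)).im := Complex.arg_nonneg_iff.1 h0
  refine ⟨⟨h0, hπ⟩, himge, ?_⟩
  rw [Complex.norm_exp]
  have : (Complex.I * k * (z - z₂)).re = -(k * (z - z₂)).im := by
    rw [mul_assoc]
    simp [Complex.mul_re]
  rw [this]
  exact Real.exp_le_one_iff.2 (by linarith)
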